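/- For n ∈ ℕ, x > 0, and 0 ≤ β < 1, the Jain basis functions L_{n,k}^{(β)}(x) = (nx (nx + βk)^{k-1} / k!) e^{-(nx + βk)} satisfy Σ_{k=0}^∞ L_{n,k}^{(β)}(x) = 1. -/

import Mathlib

open Real Filter Finset Topology

lemma fd_pow : ∀ (N : ℕ), ∀ j < N,
    ∑ k ∈ range (N+1), (-1:ℝ)^k * (N.choose k) * (k:ℝ)^j = 0 := by
  intro N
  induction N using Nat.strong_induction_on with
  | _ N ih =>
    intro j hj
    match j with
    | 0 =>
      have h := Int.alternating_sum_range_choose_of_ne (n := N) (by omega)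
      have := congrArg (fun z : ℤ => (z : ℝ)) h
      push_cast at this
      simpa using this
    | (j+1) =>
      obtain ⟨M, rfl⟩ : ∃ M, N = M + 1 := ⟨N - 1, by omega⟩
      have hjM : j < M := by omega
      rw [Finset.sum_range_succ']
      have h0 : (-1:ℝ)^0 * ((M+1).choose 0 : ℝ) * ((0:ℕ):ℝ)^(j+1) = 0 := by simp
      rw [h0, add_zero]
      have key : ∀ i ∈ range (M+1),
          (-1:ℝ)^(i+1) * (((M+1).choose (i+1)) : ℝ) * ((i+1:ℕ):ℝ)^(j+1)
          = ∑ t ∈ range (j+1), (-((M:ℝ)+1) * (j.choose t)) *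
              ((-1:ℝ)^i * (M.choose i) * (i:ℝ)^t) := by
        intro i _
        have hc : ((M+1) * M.choose i : ℕ) = ((M+1).choose (i+1)) * (i+1) :=
          Nat.add_one_mul_choose_eq M i
        have hc' : ((M+1:ℝ)) * (M.choose i : ℝ) = ((M+1).choose (i+1) : ℝ) * ((i:ℝ)+1) := by
          exact_mod_cast congrArg (fun z : ℕ => (z:ℝ)) hc
        have hb : ((i:ℝ)+1)^j = ∑ t ∈ range (j+1), (i:ℝ)^t * 1^(j-t) * (j.choose t) :=
          add_pow (i:ℝ) 1 j
        push_cast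
        rw [show ((i:ℝ)+1)^(j+1) = ((i:ℝ)+1)^j * ((i:ℝ)+1) from by ring, hb,
          Finset.sum_mul, Finset.mul_sum]
        apply Finset.sum_congr rfl
        intro t _
        have : ((M+1).choose (i+1) : ℝ) * ((i:ℝ)+1) = ((M:ℝ)+1) * (M.choose i : ℝ) := hc'.symm
        calc (-1:ℝ)^(i+1) * ((M+1).choose (i+1) : ℝ) * (((i:ℝ)^t * 1^(j-t) * (j.choose t)) * ((i:ℝ)+1))
            = ((-1:ℝ)^(i+1)) * (((M+1).choose (i+1) : ℝ) * ((i:ℝ)+1)) * ((i:ℝ)^t * (j.choose t)) := by ring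
          _ = ((-1:ℝ)^(i+1)) * (((M:ℝ)+1) * (M.choose i : ℝ)) * ((i:ℝ)^t * (j.choose t)) := by rw [this]
          _ = (-((M:ℝ)+1) * (j.choose t)) * ((-1:ℝ)^i * (M.choose i) * (i:ℝ)^t) := by
              rw [pow_succ]; ring
      rw [Finset.sum_congr rfl key, Finset.sum_comm]
      apply Finset.sum_eq_zero
      intro t ht
      have ht' := Finset.mem_range.mp ht
      rw [← Finset.mul_sum, ih M (by omega) t (by omega), mul_zero]

lemma fd_affine (N j : ℕ) (hj : j < N) (a b : ℝ) :
    ∑ k ∈ range (N+1), (-1:ℝ)^k * (N.choose k) * (a + b*(k:ℝ))^j = 0 := by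
  have key : ∀ k ∈ range (N+1),
      (-1:ℝ)^k * (N.choose k) * (a + b*(k:ℝ))^j
      = ∑ t ∈ range (j+1), (a^t * b^(j-t) * (j.choose t)) *
          ((-1:ℝ)^k * (N.choose k) * (k:ℝ)^(j-t)) := by
    intro k _
    rw [add_pow, Finset.mul_sum]
    apply Finset.sum_congr rfl
    intro t _
    rw [mul_pow]
    ring
  rw [Finset.sum_congr rfl key, Finset.sum_comm]
  apply Finset.sum_eq_zero
  intro t ht
  rw [← Finset.mul_sum, fd_pow N (j-t) (by omega), mul_zero]


noncomputable def jainW (x z : ℝ) : ℕ → ℝ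
  | 0 => 1
  | (k+1) => x * (x + z * (k+1)) ^ k

lemma hurwitz (x z : ℝ) : ∀ (n : ℕ) (y : ℝ),
    ∑ k ∈ range (n+1), (n.choose k : ℝ) * jainW x z k * (y - z*(k:ℝ))^(n-k) = (x+y)^n := by
  intro n
  induction n with
  | zero => intro y; simp [jainW]
  | succ n ih =>
    intro y
    set F : ℝ → ℝ := fun y =>
      (∑ k ∈ range (n+2), (((n+1).choose k : ℕ) : ℝ) * jainW x z k * (y - z*(k:ℝ))^(n+1-k))
        - (x+y)^(n+1) with hF
    have hderiv : ∀ w, HasDerivAt F 0 w := by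
      intro w
      have hsub : ∀ k : ℕ, HasDerivAt (fun y : ℝ => (y - z*(k:ℝ))^(n+1-k))
          (((n+1-k : ℕ) : ℝ) * (w - z*(k:ℝ))^(n-k)) w := by
        intro k
        have h1 : HasDerivAt (fun y : ℝ => y - z*(k:ℝ)) 1 w :=
          (hasDerivAt_id w).sub_const _
        have h2 := (hasDerivAt_pow (n+1-k) (w - z*(k:ℝ))).comp w h1
        simpa [Function.comp_def, show n+1-k-1 = n-k from by omega] using h2
      have hsum : HasDerivAt (fun y => ∑ k ∈ range (n+2),
          (((n+1).choose k : ℕ) : ℝ) * jainW x z k * (y - z*(k:ℝ))^(n+1-k))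
          (∑ k ∈ range (n+2), (((n+1).choose k : ℕ) : ℝ) * jainW x z k *
            (((n+1-k : ℕ) : ℝ) * (w - z*(k:ℝ))^(n-k))) w := by
        apply HasDerivAt.fun_sum
        intro k _
        exact (hsub k).const_mul _
      have hrhs : HasDerivAt (fun y : ℝ => (x+y)^(n+1)) (((n+1:ℕ):ℝ) * (x+w)^n) w := by
        have h1 : HasDerivAt (fun y : ℝ => x + y) 1 w := (hasDerivAt_id w).const_add _
        have h2 := (hasDerivAt_pow (n+1) (x+w)).comp w h1
        simpa [Function.comp_def] using h2
      have hkey : ∑ k ∈ range (n+2), (((n+1).choose k : ℕ) : ℝ) * jainW x z k *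
            (((n+1-k : ℕ) : ℝ) * (w - z*(k:ℝ))^(n-k)) = ((n+1:ℕ):ℝ) * (x+w)^n := by
        rw [Finset.sum_range_succ]
        have hz : (((n+1) - (n+1) : ℕ) : ℝ) = 0 := by norm_num
        rw [show ((n+1).choose (n+1) : ℝ) * jainW x z (n+1) *
            ((((n+1)-(n+1) : ℕ) : ℝ) * (w - z*((n+1:ℕ):ℝ))^(n-(n+1))) = 0 from by
          rw [hz]; ring, add_zero]
        rw [← ih w, Finset.mul_sum]
        apply Finset.sum_congr rfl
        intro k hk
        have hk' := Finset.mem_range.mp hk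
        have hcc : ((n+1).choose k) * (n+1-k) = (n+1) * (n.choose k) := by
          have h1 := Nat.add_one_mul_choose_eq n k
          have h2 := Nat.choose_succ_right_eq (n+1) k
          exact (h1.trans h2).symm
        have hcc' : (((n+1).choose k : ℕ) : ℝ) * (((n+1-k : ℕ)) : ℝ)
            = ((n+1 : ℕ) : ℝ) * ((n.choose k : ℕ) : ℝ) := by exact_mod_cast congrArg (fun z : ℕ => (z:ℝ)) hcc
        calc (((n+1).choose k : ℕ) : ℝ) * jainW x z k * ((((n+1-k:ℕ)) : ℝ) * (w - z*(k:ℝ))^(n-k))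
            = ((((n+1).choose k : ℕ) : ℝ) * (((n+1-k : ℕ)) : ℝ)) * (jainW x z k * (w - z*(k:ℝ))^(n-k)) := by ring
          _ = (((n+1:ℕ) : ℝ) * ((n.choose k : ℕ) : ℝ)) * (jainW x z k * (w - z*(k:ℝ))^(n-k)) := by rw [hcc']
          _ = ((n+1:ℕ):ℝ) * (((n.choose k : ℕ) : ℝ) * jainW x z k * (w - z*(k:ℝ))^(n-k)) := by ring
      have := hsum.sub hrhs
      rw [hkey, sub_self] at this
      exact this
    have hconst : F y = F (-x) :=
      is_const_of_deriv_eq_zero (fun w => (hderiv w).differentiableAt)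
        (fun w => (hderiv w).deriv) y (-x)
    have hval : F (-x) = 0 := by
      rw [hF]
      simp only
      rw [show (x + -x)^(n+1) = 0 from by rw [add_neg_cancel]; exact zero_pow (by omega)]
      rw [sub_zero]
      have hterm : ∀ k ∈ range (n+2), (((n+1).choose k : ℕ) : ℝ) * jainW x z k *
          ((-x) - z*(k:ℝ))^(n+1-k)
          = ((-1:ℝ)^(n+1)) * (x * ((-1:ℝ)^k * (((n+1).choose k : ℕ) : ℝ) * (x + z*(k:ℝ))^n)) := by
        intro k hk
        have hk' : k ≤ n+1 := by have := Finset.mem_range.mp hk; omega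
        have hneg : ((-x) - z*(k:ℝ))^(n+1-k) = (-1:ℝ)^(n+1-k) * (x + z*(k:ℝ))^(n+1-k) := by
          rw [show (-x) - z*(k:ℝ) = (-1) * (x + z*(k:ℝ)) from by ring, mul_pow]
        have hW : jainW x z k * (x + z*(k:ℝ))^(n+1-k) = x * (x + z*(k:ℝ))^n := by
          match k with
          | 0 => simp [jainW]; rw [pow_succ]; ring
          | (i+1) =>
            have hkn : i + (n-i) = n := by
              have := Finset.mem_range.mp hk; omega
            simp only [jainW]
            push_cast
            rw [mul_assoc, ← pow_add, hkn]
        have hsign : (-1:ℝ)^(n+1-k) = (-1:ℝ)^(n+1) * (-1:ℝ)^k := by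
          have : (-1:ℝ)^(n+1-k) * (-1:ℝ)^k = (-1:ℝ)^(n+1) := by
            rw [← pow_add]; congr 1; omega
          have h2 : ((-1:ℝ)^k) * ((-1:ℝ)^k) = 1 := by
            rw [← pow_add, Even.neg_one_pow ⟨k, by omega⟩]
          calc (-1:ℝ)^(n+1-k) = (-1:ℝ)^(n+1-k) * ((-1:ℝ)^k * (-1:ℝ)^k) := by rw [h2, mul_one]
            _ = ((-1:ℝ)^(n+1-k) * (-1:ℝ)^k) * (-1:ℝ)^k := by ring
            _ = (-1:ℝ)^(n+1) * (-1:ℝ)^k := by rw [this]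
        calc (((n+1).choose k : ℕ) : ℝ) * jainW x z k * ((-x) - z*(k:ℝ))^(n+1-k)
            = (-1:ℝ)^(n+1-k) * (((n+1).choose k : ℕ) : ℝ) * (jainW x z k * (x + z*(k:ℝ))^(n+1-k)) := by
              rw [hneg]; ring
          _ = (-1:ℝ)^(n+1-k) * (((n+1).choose k : ℕ) : ℝ) * (x * (x + z*(k:ℝ))^n) := by rw [hW]
          _ = ((-1:ℝ)^(n+1)) * (x * ((-1:ℝ)^k * (((n+1).choose k : ℕ) : ℝ) * (x + z*(k:ℝ))^n)) := by
              rw [hsign]; ring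
      rw [Finset.sum_congr rfl hterm, ← Finset.mul_sum, ← Finset.mul_sum,
        fd_affine (n+1) n (by omega) x z]
      ring
    have : F y = 0 := hconst.trans hval
    have h2 : (∑ k ∈ range (n+2), (((n+1).choose k : ℕ) : ℝ) * jainW x z k * (y - z*(k:ℝ))^(n+1-k)) - (x+y)^(n+1) = 0 := this
    linarith [h2]


-- helper (a)
lemma pow_add_le_exp (N : ℕ) (d : ℝ) (h0 : 0 ≤ (N:ℝ) + d) (h1 : N = 0 → 0 ≤ d) :
    ((N:ℝ) + d)^N ≤ (N:ℝ)^N * Real.exp d := by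
  match N with
  | 0 => simpa using Real.one_le_exp (h1 rfl)
  | (M+1) =>
    set N := M + 1
    have hN : (0:ℝ) < N := by positivity
    have hle : (N:ℝ) + d ≤ (N:ℝ) * Real.exp (d / N) := by
      have h2 : 1 + d / (N:ℝ) ≤ Real.exp (d / N) := by
        linarith [Real.add_one_le_exp (d / (N:ℝ))]
      calc (N:ℝ) + d = (N:ℝ) * (1 + d / N) := by field_simp
        _ ≤ (N:ℝ) * Real.exp (d / N) := by
            exact mul_le_mul_of_nonneg_left h2 (le_of_lt hN)
    calc ((N:ℝ) + d)^N ≤ ((N:ℝ) * Real.exp (d / N))^N := pow_le_pow_left₀ h0 hle N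
      _ = (N:ℝ)^N * Real.exp (d / N) ^ N := mul_pow _ _ _
      _ = (N:ℝ)^N * Real.exp d := by
          rw [← Real.exp_nat_mul]
          congr 2
          field_simp

-- helper (b)
lemma choose_bound (m k : ℕ) (hk : k ≤ m) :
    ((k:ℝ))^k * (((m-k:ℕ)):ℝ)^(m-k) * (m.choose k : ℝ) ≤ (m:ℝ)^m := by
  have hcast : ((k:ℝ)) + ((m-k:ℕ):ℝ) = (m:ℝ) := by
    push_cast [Nat.cast_sub hk]; ring
  have h := add_pow (k:ℝ) ((m-k:ℕ):ℝ) m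
  rw [hcast] at h
  rw [h]
  apply Finset.single_le_sum (f := fun j => (k:ℝ)^j * ((m-k:ℕ):ℝ)^(m-j) * (m.choose j : ℝ))
  · intro j _
    positivity
  · exact Finset.mem_range.mpr (by omega)

lemma jainW_succ (x z : ℝ) (j : ℕ) : jainW x z (j+1) = x * (x + z * ((j:ℝ)+1)) ^ j := by
  simp [jainW]


section Aux
variable (α β : ℝ)

noncomputable def jainF (α β : ℝ) (m k : ℕ) : ℝ :=
  if k ≤ m then (m.choose k : ℝ) * jainW α β k * ((m:ℝ) - α - β*(k:ℝ))^(m-k) / (m:ℝ)^m else 0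

lemma jain_row (α β : ℝ) (m : ℕ) (hm : 1 ≤ m) : ∑' k, jainF α β m k = 1 := by
  have hzero : ∀ k ∉ range (m+1), jainF α β m k = 0 := by
    intro k hk
    rw [jainF, if_neg]
    exact fun h => hk (Finset.mem_range.mpr (by omega))
  rw [tsum_eq_sum hzero]
  have : ∀ k ∈ range (m+1), jainF α β m k
      = (m.choose k : ℝ) * jainW α β k * (((m:ℝ) - α) - β*(k:ℝ))^(m-k) / (m:ℝ)^m := by
    intro k hk
    rw [jainF, if_pos (by have := Finset.mem_range.mp hk; omega)]
  rw [Finset.sum_congr rfl this, ← Finset.sum_div, hurwitz α β m ((m:ℝ) - α)]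
  rw [show α + ((m:ℝ) - α) = (m:ℝ) from by ring]
  exact div_self (by positivity)

lemma jain_lim (α β : ℝ) (hα : 0 < α) (hβ0 : 0 ≤ β) (k : ℕ) :
    Tendsto (fun m => jainF α β m k) atTop
      (𝓝 (jainW α β k / (k.factorial : ℝ) * Real.exp (-(α + β*(k:ℝ))))) := by
  set c := α + β*(k:ℝ) with hc
  have hcpos : 0 < c := by
    have : 0 ≤ β*(k:ℝ) := by positivity
    linarith
  obtain ⟨N₀, hN₀⟩ := exists_nat_gt c
  set T : ℕ → ℝ := fun m => (jainW α β k / (k.factorial : ℝ)) *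
      ((m.descFactorial k : ℝ) / (m:ℝ)^k) *
      ((1 - c/(m:ℝ))^m / (1 - c/(m:ℝ))^k) with hT
  have hEq : T =ᶠ[atTop] (fun m => jainF α β m k) := by
    filter_upwards [eventually_ge_atTop (max k (N₀+1))] with m hm
    have hkm : k ≤ m := le_trans (le_max_left _ _) hm
    have hmN : N₀ + 1 ≤ m := le_trans (le_max_right _ _) hm
    have hmpos : (0:ℝ) < m := by
      have : (1:ℕ) ≤ m := by omega
      exact_mod_cast Nat.lt_of_lt_of_le Nat.zero_lt_one this
    have hcm : c < (m:ℝ) := lt_of_lt_of_le hN₀ (by exact_mod_cast by omega)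
    have hbase : (1 : ℝ) - c/(m:ℝ) = ((m:ℝ) - c)/(m:ℝ) := by field_simp
    have hbne : (1:ℝ) - c/(m:ℝ) ≠ 0 := by
      rw [hbase]
      exact (div_pos (by linarith) hmpos).ne'
    have hQ : (1 - c/(m:ℝ))^m / (1 - c/(m:ℝ))^k = ((m:ℝ) - c)^(m-k) / (m:ℝ)^(m-k) := by
      rw [div_eq_mul_inv, ← pow_sub₀ _ hbne hkm, hbase, div_pow]
    have hdesc : ((m.descFactorial k : ℕ):ℝ) = (k.factorial : ℝ) * (m.choose k : ℝ) := by
      exact_mod_cast congrArg (fun z : ℕ => (z:ℝ)) (Nat.descFactorial_eq_factorial_mul_choose m k)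
    have hmm : (m:ℝ)^k * (m:ℝ)^(m-k) = (m:ℝ)^m := by
      rw [← pow_add]
      congr 1
      omega
    have hfk : (k.factorial : ℝ) ≠ 0 := by positivity
    have hmne : (m:ℝ) ≠ 0 := hmpos.ne'
    rw [hT]
    simp only
    rw [hQ, hdesc, jainF, if_pos hkm,
      show (m:ℝ) - α - β*(k:ℝ) = (m:ℝ) - c from by rw [hc]; ring]
    field_simp
    rw [← hmm]
    ring
  have hbtend : Tendsto (fun m : ℕ => 1 - c/(m:ℝ)) atTop (𝓝 1) := by
    have h0 : Tendsto (fun m : ℕ => c * (1/(m:ℝ))) atTop (𝓝 0) := by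
      simpa using tendsto_one_div_atTop_nhds_zero_nat.const_mul c
    have h1 : Tendsto (fun m : ℕ => 1 - c * (1/(m:ℝ))) atTop (𝓝 (1 - 0)) :=
      tendsto_const_nhds.sub h0
    simpa [div_eq_mul_inv] using h1
  have h2 : Tendsto (fun m : ℕ => (1 - c/(m:ℝ))^m) atTop (𝓝 (Real.exp (-c))) := by
    have := Real.tendsto_one_add_div_pow_exp (-c)
    apply this.congr
    intro m
    rw [neg_div, ← sub_eq_add_neg]
  have h3 : Tendsto (fun m : ℕ => (1 - c/(m:ℝ))^k) atTop (𝓝 1) := by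
    simpa using hbtend.pow k
  have h1 : Tendsto (fun m : ℕ => (m.descFactorial k : ℝ) / (m:ℝ)^k) atTop (𝓝 1) := by
    have h1' : Tendsto (fun m : ℕ => ∏ i ∈ range k, (1 - (i:ℝ)/(m:ℝ))) atTop (𝓝 1) := by
      have := tendsto_finset_prod (range k)
        (f := fun (i : ℕ) (m : ℕ) => 1 - (i:ℝ)/(m:ℝ))
        (fun i _ => by
          have h0 : Tendsto (fun m : ℕ => (i:ℝ) * (1/(m:ℝ))) atTop (𝓝 0) := by
            simpa using tendsto_one_div_atTop_nhds_zero_nat.const_mul (i:ℝ)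
          have h1 : Tendsto (fun m : ℕ => 1 - (i:ℝ) * (1/(m:ℝ))) atTop (𝓝 (1 - 0)) :=
            tendsto_const_nhds.sub h0
          simpa [div_eq_mul_inv] using h1)
      simpa using this
    apply h1'.congr'
    filter_upwards [eventually_ge_atTop (max k 1)] with m hm
    have hkm : k ≤ m := le_trans (le_max_left _ _) hm
    have hm1 : 1 ≤ m := le_trans (le_max_right _ _) hm
    have hmne : (m:ℝ) ≠ 0 := by
      have : (0:ℝ) < m := by exact_mod_cast hm1
      exact this.ne'
    have hcast : ((m.descFactorial k : ℕ):ℝ) = ∏ i ∈ range k, ((m:ℝ) - (i:ℝ)) := by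
      rw [Nat.descFactorial_eq_prod_range, Nat.cast_prod]
      apply Finset.prod_congr rfl
      intro i hi
      have hik : i ≤ m := le_trans (le_of_lt (Finset.mem_range.mp hi)) hkm
      exact Nat.cast_sub hik
    rw [hcast, show (m:ℝ)^k = ∏ _i ∈ range k, (m:ℝ) from by
        rw [Finset.prod_const, Finset.card_range], ← Finset.prod_div_distrib]
    apply Finset.prod_congr rfl
    intro i _
    field_simp
  have hconst : Tendsto (fun _ : ℕ => jainW α β k / (k.factorial : ℝ)) atTop
      (𝓝 (jainW α β k / (k.factorial : ℝ))) := tendsto_const_nhds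
  have htot := (hconst.mul h1).mul (h2.div h3 one_ne_zero)
  have := htot.congr' hEq
  simpa [hc] using this

noncomputable def jainG (α β : ℝ) (k : ℕ) : ℝ :=
  if k = 0 then 1 else α/(k:ℝ) * (β + α/(k:ℝ))^(k-1) * Real.exp ((k:ℝ)*(1-β) - α)

lemma jainG_nonneg (α β : ℝ) (hα : 0 < α) (hβ0 : 0 ≤ β) (k : ℕ) : 0 ≤ jainG α β k := by
  rw [jainG]
  split
  · norm_num
  · next h =>
    have hk : (0:ℝ) < k := by exact_mod_cast Nat.pos_of_ne_zero h
    positivity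

lemma jain_bound (α β : ℝ) (hα : 0 < α) (hβ0 : 0 ≤ β) (hβ1 : β < 1) (m k : ℕ)
    (hm1 : 1 ≤ m) (hmα : α ≤ (1-β)*(m:ℝ)) :
    0 ≤ jainF α β m k ∧ jainF α β m k ≤ jainG α β k := by
  have hmpos : (0:ℝ) < m := by exact_mod_cast Nat.lt_of_lt_of_le Nat.zero_lt_one hm1
  have hmexp : (1-β)*(m:ℝ) = (m:ℝ) - β*(m:ℝ) := by ring
  by_cases hkm : k ≤ m
  case neg =>
    rw [jainF, if_neg hkm]
    exact ⟨le_refl 0, jainG_nonneg α β hα hβ0 k⟩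
  case pos =>
    have hkmr : (k:ℝ) ≤ (m:ℝ) := by exact_mod_cast hkm
    have hbase0 : (0:ℝ) ≤ (m:ℝ) - α - β*(k:ℝ) := by
      have h1 : β*(k:ℝ) ≤ β*(m:ℝ) := mul_le_mul_of_nonneg_left hkmr hβ0
      linarith
    have hWnn : 0 ≤ jainW α β k := by
      match k with
      | 0 => norm_num [jainW]
      | (j+1) =>
        rw [jainW_succ]
        have : (0:ℝ) ≤ α + β * ((j:ℝ)+1) := by positivity
        positivity
    have hFnn : 0 ≤ jainF α β m k := by
      rw [jainF, if_pos hkm]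
      apply div_nonneg _ (by positivity)
      apply mul_nonneg (mul_nonneg (by positivity) hWnn) (pow_nonneg hbase0 _)
    refine ⟨hFnn, ?_⟩
    match k with
    | 0 =>
      rw [jainF, if_pos hkm, jainG, if_pos rfl]
      simp only [Nat.choose_zero_right, Nat.cast_one, Nat.cast_zero, mul_zero, sub_zero,
        Nat.sub_zero, one_mul, jainW]
      rw [div_le_one (by positivity)]
      have h0 : (0:ℝ) ≤ (m:ℝ) - α := by simpa using hbase0
      have h1 : (m:ℝ) - α ≤ (m:ℝ) := by linarith
      exact pow_le_pow_left₀ h0 h1 m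
    | (j+1) =>
      have hk0 : (0:ℝ) < ((j+1:ℕ):ℝ) := by positivity
      set d : ℝ := ((j+1:ℕ):ℝ)*(1-β) - α with hd
      have hW : jainW α β (j+1) = α * (α + β*((j+1:ℕ):ℝ))^j := by
        rw [jainW_succ]
        norm_num
      have hB : ((m:ℝ) - α - β*((j+1:ℕ):ℝ))^(m-(j+1))
          ≤ ((m-(j+1):ℕ):ℝ)^(m-(j+1)) * Real.exp d := by
        have hcast : (m:ℝ) - α - β*((j+1:ℕ):ℝ) = ((m-(j+1):ℕ):ℝ) + d := by
          rw [Nat.cast_sub hkm, hd]; push_cast; ring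
        rw [hcast]
        apply pow_add_le_exp
        · rw [← hcast]; exact hbase0
        · intro h0
          have hkm' : (j+1 : ℕ) = m := by omega
          have : ((j+1:ℕ):ℝ) = (m:ℝ) := by exact_mod_cast congrArg (fun z : ℕ => (z:ℝ)) hkm'
          rw [hd, this]
          linarith
      have hA := choose_bound m (j+1) hkm
      have hC : (0:ℝ) ≤ (m.choose (j+1) : ℝ) := by positivity
      have hexpd : (0:ℝ) < Real.exp d := Real.exp_pos d
      have hstep1 : (m.choose (j+1) : ℝ) * jainW α β (j+1) * ((m:ℝ) - α - β*((j+1:ℕ):ℝ))^(m-(j+1))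
          ≤ (m.choose (j+1) : ℝ) * jainW α β (j+1) * (((m-(j+1):ℕ):ℝ)^(m-(j+1)) * Real.exp d) :=
        mul_le_mul_of_nonneg_left hB (mul_nonneg hC hWnn)
      have hstep2 : (m.choose (j+1) : ℝ) * jainW α β (j+1) * (((m-(j+1):ℕ):ℝ)^(m-(j+1)) * Real.exp d)
          = (((j+1:ℕ):ℝ)^(j+1) * ((m-(j+1):ℕ):ℝ)^(m-(j+1)) * (m.choose (j+1) : ℝ))
            * (jainW α β (j+1) * Real.exp d / ((j+1:ℕ):ℝ)^(j+1)) := by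
        field_simp
      have hstep3 : (((j+1:ℕ):ℝ)^(j+1) * ((m-(j+1):ℕ):ℝ)^(m-(j+1)) * (m.choose (j+1) : ℝ))
            * (jainW α β (j+1) * Real.exp d / ((j+1:ℕ):ℝ)^(j+1))
          ≤ (m:ℝ)^m * (jainW α β (j+1) * Real.exp d / ((j+1:ℕ):ℝ)^(j+1)) :=
        mul_le_mul_of_nonneg_right hA (by positivity)
      have hG : jainG α β (j+1) = jainW α β (j+1) * Real.exp d / ((j+1:ℕ):ℝ)^(j+1) := by
        rw [jainG, if_neg (Nat.succ_ne_zero j), hW, hd]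
        have h1 : β + α/((j+1:ℕ):ℝ) = (α + β*((j+1:ℕ):ℝ))/((j+1:ℕ):ℝ) := by
          field_simp
          ring
        rw [show (j+1) - 1 = j from rfl, h1, div_pow]
        rw [show ((j+1:ℕ):ℝ)^(j+1) = ((j+1:ℕ):ℝ)^j * ((j+1:ℕ):ℝ) from pow_succ _ _]
        field_simp
      rw [jainF, if_pos hkm, hG, div_le_div_iff₀ (by positivity) (by positivity)]
      calc (m.choose (j+1) : ℝ) * jainW α β (j+1) * ((m:ℝ) - α - β*((j+1:ℕ):ℝ))^(m-(j+1))
            * ((j+1:ℕ):ℝ)^(j+1)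
          ≤ ((m:ℝ)^m * (jainW α β (j+1) * Real.exp d / ((j+1:ℕ):ℝ)^(j+1))) * ((j+1:ℕ):ℝ)^(j+1) := by
            apply mul_le_mul_of_nonneg_right _ (by positivity)
            exact le_trans hstep1 (le_trans (le_of_eq hstep2) hstep3)
          _ = jainW α β (j+1) * Real.exp d * (m:ℝ)^m := by
            field_simp

lemma jainG_summable (α β : ℝ) (hα : 0 < α) (hβ0 : 0 ≤ β) (hβ1 : β < 1) :
    Summable (jainG α β) := by
  apply (summable_nat_add_iff 1).mp
  have hval : ∀ n : ℕ, jainG α β (n+1)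
      = α/((n+1:ℕ):ℝ) * (β + α/((n+1:ℕ):ℝ))^n * Real.exp (((n+1:ℕ):ℝ)*(1-β) - α) := by
    intro n
    rw [jainG, if_neg (Nat.succ_ne_zero n)]
    norm_num
  have hnn : ∀ n : ℕ, 0 ≤ jainG α β (n+1) := fun n => jainG_nonneg α β hα hβ0 (n+1)
  rcases eq_or_lt_of_le hβ0 with hβ | hβ
  · -- β = 0
    have h1 : Summable (fun i : ℕ => (α * Real.exp 1)^i / (i.factorial : ℝ)) :=
      Real.summable_pow_div_factorial _
    have h2 : Summable (fun n : ℕ => (α * Real.exp 1)^(n+1) / ((n+1).factorial : ℝ)) :=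
      (summable_nat_add_iff 1).mpr h1
    apply Summable.of_nonneg_of_le hnn _ (h2.mul_left (Real.exp (-α)))
    intro n
    rw [hval n, ← hβ]
    have hk : (0:ℝ) < ((n+1:ℕ):ℝ) := by positivity
    have hfpos : (0:ℝ) < ((n+1).factorial : ℝ) := by
      exact_mod_cast Nat.factorial_pos (n+1)
    have hfle : ((n+1).factorial : ℝ) ≤ ((n+1:ℕ):ℝ)^(n+1) := by
      exact_mod_cast Nat.factorial_le_pow (n+1)
    have e2 : Real.exp (((n+1:ℕ):ℝ)*(1-0) - α)
        = Real.exp 1^(n+1) * Real.exp (-α) := by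
      rw [show ((n+1:ℕ):ℝ)*(1-0) - α = ((n+1:ℕ):ℝ)*1 + (-α) from by ring,
        Real.exp_add, Real.exp_nat_mul]
    calc α/((n+1:ℕ):ℝ) * (0 + α/((n+1:ℕ):ℝ))^n * Real.exp (((n+1:ℕ):ℝ)*(1-0) - α)
        = α^(n+1) * Real.exp 1^(n+1) * Real.exp (-α) / ((n+1:ℕ):ℝ)^(n+1) := by
          rw [e2, zero_add, div_pow]
          rw [show ((n+1:ℕ):ℝ)^(n+1) = ((n+1:ℕ):ℝ)^n * ((n+1:ℕ):ℝ) from pow_succ _ _]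
          field_simp
          ring
      _ ≤ α^(n+1) * Real.exp 1^(n+1) * Real.exp (-α) / ((n+1).factorial : ℝ) := by
          apply div_le_div_of_nonneg_left (by positivity) hfpos hfle
      _ = Real.exp (-α) * ((α * Real.exp 1)^(n+1) / ((n+1).factorial : ℝ)) := by
          rw [mul_pow]
          ring
  · -- β > 0
    set r := β * Real.exp (1-β) with hr
    have hr0 : 0 ≤ r := by positivity
    have hr1 : r < 1 := by
      have hlog := Real.log_lt_sub_one_of_pos hβ (ne_of_lt hβ1)
      have : r = Real.exp (Real.log β + (1-β)) := by
        rw [Real.exp_add, Real.exp_log hβ]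
      calc r = Real.exp (Real.log β + (1-β)) := this
        _ < Real.exp 0 := Real.exp_lt_exp.mpr (by linarith)
        _ = 1 := Real.exp_zero
    set C := α * Real.exp (α/β) * Real.exp (1 - β - α) with hC
    apply Summable.of_nonneg_of_le hnn _ ((summable_geometric_of_lt_one hr0 hr1).mul_left C)
    intro n
    rw [hval n]
    have hk : (0:ℝ) < ((n+1:ℕ):ℝ) := by positivity
    have h1 : α/((n+1:ℕ):ℝ) ≤ α := by
      apply div_le_self hα.le
      exact_mod_cast Nat.one_le_iff_ne_zero.mpr (Nat.succ_ne_zero n)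
    have hb : β + α/((n+1:ℕ):ℝ) ≤ β * Real.exp (α/(β*((n+1:ℕ):ℝ))) := by
      have he := Real.add_one_le_exp (α/(β*((n+1:ℕ):ℝ)))
      calc β + α/((n+1:ℕ):ℝ) = β * (α/(β*((n+1:ℕ):ℝ)) + 1) := by
            field_simp
            ring
        _ ≤ β * Real.exp (α/(β*((n+1:ℕ):ℝ))) := mul_le_mul_of_nonneg_left he hβ0
    have h2 : (β + α/((n+1:ℕ):ℝ))^n ≤ β^n * Real.exp (α/β) := by
      have hbase : (0:ℝ) ≤ β + α/((n+1:ℕ):ℝ) := by positivity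
      calc (β + α/((n+1:ℕ):ℝ))^n ≤ (β * Real.exp (α/(β*((n+1:ℕ):ℝ))))^n :=
            pow_le_pow_left₀ hbase hb n
        _ = β^n * Real.exp ((n:ℝ) * (α/(β*((n+1:ℕ):ℝ)))) := by
            rw [mul_pow, Real.exp_nat_mul]
        _ ≤ β^n * Real.exp (α/β) := by
            apply mul_le_mul_of_nonneg_left _ (by positivity)
            apply Real.exp_le_exp.mpr
            rw [← mul_div_assoc, div_le_div_iff₀ (by positivity) hβ]
            push_cast
            nlinarith [mul_nonneg hα.le hβ0]
        
    have h3 : Real.exp (((n+1:ℕ):ℝ)*(1-β) - α)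
        = Real.exp (1-β-α) * Real.exp (1-β)^n := by
      rw [← Real.exp_nat_mul, ← Real.exp_add]
      congr 1
      push_cast
      ring
    have hGnn0 : (0:ℝ) ≤ α/((n+1:ℕ):ℝ) := by positivity
    calc α/((n+1:ℕ):ℝ) * (β + α/((n+1:ℕ):ℝ))^n * Real.exp (((n+1:ℕ):ℝ)*(1-β) - α)
        ≤ α * (β^n * Real.exp (α/β)) * (Real.exp (1-β-α) * Real.exp (1-β)^n) := by
          rw [h3]
          apply mul_le_mul _ (le_refl _) (by positivity) (by positivity)
          exact mul_le_mul h1 h2 (by positivity) hα.le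
      _ = C * r^n := by
          rw [hC, hr, mul_pow]
          ring

lemma jain_aux (α β : ℝ) (hα : 0 < α) (hβ0 : 0 ≤ β) (hβ1 : β < 1) :
    ∑' k : ℕ, jainW α β k / (k.factorial : ℝ) * Real.exp (-(α + β*(k:ℝ))) = 1 := by
  obtain ⟨N₁, hN₁⟩ := exists_nat_ge (α/(1-β))
  have h1β : (0:ℝ) < 1 - β := by linarith
  have hbound : ∀ᶠ m in atTop, ∀ k, ‖jainF α β m k‖ ≤ jainG α β k := by
    filter_upwards [eventually_ge_atTop (max N₁ 1)] with m hm
    intro k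
    have hm1 : 1 ≤ m := le_trans (le_max_right _ _) hm
    have hmα : α ≤ (1-β)*(m:ℝ) := by
      have h2 : (N₁:ℝ) ≤ (m:ℝ) := by exact_mod_cast le_trans (le_max_left _ _) hm
      have h3 : α ≤ (N₁:ℝ) * (1-β) := (div_le_iff₀ h1β).mp hN₁
      nlinarith
    obtain ⟨h0, h1⟩ := jain_bound α β hα hβ0 hβ1 m k hm1 hmα
    rwa [Real.norm_of_nonneg h0]
  have htend := tendsto_tsum_of_dominated_convergence
    (jainG_summable α β hα hβ0 hβ1) (fun k => jain_lim α β hα hβ0 k) hbound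
  have hone : (fun m => ∑' k, jainF α β m k) =ᶠ[atTop] (fun _ => (1:ℝ)) := by
    filter_upwards [eventually_ge_atTop 1] with m hm
    exact jain_row α β m hm
  exact (tendsto_nhds_unique (htend.congr' hone) tendsto_const_nhds).symm ▸ rfl

end Aux

/-- The Jain basis functions `L_{n,k}^{(β)}(x) = (nx (nx+βk)^{k-1}/k!) e^{-(nx+βk)}`
sum to one. -/
theorem jain_basis_sum_one (n : ℕ) (hn : 0 < n) (x β : ℝ) (hx : 0 < x)
    (hβ0 : 0 ≤ β) (hβ1 : β < 1) :
    ∑' k : ℕ,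
      (n * x * (n * x + β * k) ^ ((k : ℝ) - 1) / (Nat.factorial k : ℝ)) *
        Real.exp (-(n * x + β * k)) = 1 := by
  have hα : (0:ℝ) < (n:ℝ) * x := by
    have : (0:ℝ) < (n:ℝ) := by exact_mod_cast hn
    positivity
  have hconv : ∀ k : ℕ,
      ((n:ℝ) * x * ((n:ℝ) * x + β * (k:ℝ)) ^ ((k : ℝ) - 1) / (Nat.factorial k : ℝ)) *
        Real.exp (-((n:ℝ) * x + β * (k:ℝ)))
      = jainW ((n:ℝ)*x) β k / (k.factorial : ℝ) * Real.exp (-((n:ℝ)*x + β*(k:ℝ))) := by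
    intro k
    congr 1
    match k with
    | 0 =>
      simp only [Nat.cast_zero, mul_zero, add_zero, Nat.factorial_zero, Nat.cast_one, div_one,
        zero_sub, jainW]
      rw [Real.rpow_neg_one]
      exact mul_inv_cancel₀ hα.ne'
    | (j+1) =>
      have h1 : ((j+1:ℕ):ℝ) - 1 = ((j:ℕ):ℝ) := by push_cast; ring
      rw [h1, Real.rpow_natCast, jainW_succ]
      push_cast
      ring
  rw [tsum_congr hconv]
  exact jain_aux ((n:ℝ)*x) β hα hβ0 hβ1
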